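/- Conversely, if an assembly A (with partial orientation data) admits at least one non-conflicting realization, then every scaffold participates in at most two assembly points of A, and any two assembly points sharing a scaffold are non-conflicting or semi-conflicting (i.e., not every pair of their realizations is conflicting). -/
import Mathlib


/-- An assembly point: two scaffolds with partial orientation data
(`none` = unoriented, `some b` = oriented, `true` = forward). -/
structure APoint (S : Type) where
  s1 : S
  s2 : S
  o1 : Option Bool
  o2 : Option Bool
deriving DecidableEq

/-- A global orientation `σ` extends (is consistent with) the partial data of `p`. -/
def APoint.extends' {S : Type} (σ : S → Bool) (p : APoint S) : Prop :=
  (∀ b, p.o1 = some b → σ p.s1 = b) ∧ (∀ b, p.o2 = some b → σ p.s2 = b)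

/-- The extremity of its left scaffold used by a point realized via `σ`
(head `(s, true)` if `s` is forward). -/
def APoint.usedL {S : Type} (σ : S → Bool) (p : APoint S) : S × Bool := (p.s1, σ p.s1)

/-- The extremity of its right scaffold used by a point realized via `σ`
(tail `(s, false)` if `s` is forward). -/
def APoint.usedR {S : Type} (σ : S → Bool) (p : APoint S) : S × Bool := (p.s2, !σ p.s2)

/-- Two realized points use disjoint sets of extremities (are non-conflicting). -/
def APoint.disj {S : Type} (τ τ' : S → Bool) (p q : APoint S) : Prop :=
  p.usedL τ ≠ q.usedL τ' ∧ p.usedL τ ≠ q.usedR τ' ∧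
  p.usedR τ ≠ q.usedL τ' ∧ p.usedR τ ≠ q.usedR τ'

/-- `σ` is a non-conflicting realization of the assembly `A`: it extends the partial
orientation data of every point, and every scaffold extremity is used at most once. -/
def NCR {S : Type} (A : Finset (APoint S)) (σ : S → Bool) : Prop :=
  (∀ p ∈ A, p.extends' σ) ∧
  (∀ p ∈ A, p.usedL σ ≠ p.usedR σ) ∧
  (∀ p ∈ A, ∀ q ∈ A, p ≠ q → APoint.disj σ σ p q)

/-- if an assembly `A` admits a non-conflicting realization, then every
scaffold participates in at most two points of `A`, and any two points sharing a
scaffold have some pair of realizations that is non-conflicting (uses disjoint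
extremities), i.e. they are non-conflicting or semi-conflicting. -/
theorem nonconflicting_realization_necessary {S : Type} [Fintype S] [DecidableEq S]
    (A : Finset (APoint S)) (σ : S → Bool)
    (hss : ∀ p ∈ A, p.s1 ≠ p.s2)
    (h : NCR A σ) :
    (∀ s : S, (A.filter (fun p => p.s1 = s ∨ p.s2 = s)).card ≤ 2) ∧
    (∀ p ∈ A, ∀ q ∈ A, p ≠ q →
      (p.s1 = q.s1 ∨ p.s1 = q.s2 ∨ p.s2 = q.s1 ∨ p.s2 = q.s2) →
      ∃ τ τ' : S → Bool, p.extends' τ ∧ q.extends' τ' ∧ APoint.disj τ τ' p q) := by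
  obtain ⟨hext, hLR, hdisj⟩ := h
  constructor
  · intro s
    have hinj : Set.InjOn (fun p : APoint S => if p.s1 = s then σ s else !σ s)
        ↑(A.filter (fun p => p.s1 = s ∨ p.s2 = s)) := by
      intro p hp q hq hfq
      simp only [Finset.coe_filter, Set.mem_setOf_eq, Finset.mem_filter] at hp hq
      by_contra hne
      have hd := hdisj p hp.1 q hq.1 hne
      have hp2 : p.s1 = s ∨ p.s2 = s := hp.2
      have hq2 : q.s1 = s ∨ q.s2 = s := hq.2
      simp only at hfq
      rcases hp2 with hp2 | hp2 <;> rcases hq2 with hq2 | hq2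
      · exact hd.1 (by simp [APoint.usedL, hp2, hq2])
      · rw [if_pos hp2, if_neg (fun hh => hss q hq.1 (hh.trans hq2.symm))] at hfq
        simp at hfq
      · rw [if_neg (fun hh => hss p hp.1 (hh.trans hp2.symm)), if_pos hq2] at hfq
        simp at hfq
      · exact hd.2.2.2 (by simp [APoint.usedR, hp2, hq2])
    have := Finset.card_le_card_of_injOn _ (fun p _ => Finset.mem_univ _) hinj
    simpa using this
  · intro p hp q hq hne _
    exact ⟨σ, σ, hext p hp, hext q hq, hdisj p hp q hq hne⟩
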